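/- (Wiener's lemma for Bochner–Riesz means on T^d) Let μ be a finite complex Borel measure on T^d and δ ≥ 0. Then for every x ∈ T^d, μ({x}) = lim_{N→∞} (1/β_N^{d,δ}) Σ_{j ∈ Z^d, |j| ≤ N} (1 − |j|²/N²)_+^δ μ̂(j) e^{2πi⟨j,x⟩}, where β_N^{d,δ} = Σ_{k ∈ Z^d, |k| ≤ N} (1 − |k|²/N²)^δ. -/

import Mathlib

open MeasureTheory Filter Topology Real

/-- Integral of a complex-valued function against a finite complex measure. -/
noncomputable def cInt {α : Type*} [MeasurableSpace α]
    (μ : MeasureTheory.ComplexMeasure α) (f : α → ℂ) : ℂ :=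
  ((∫ x, f x ∂μ.re.toJordanDecomposition.posPart)
      - ∫ x, f x ∂μ.re.toJordanDecomposition.negPart)
    + Complex.I * ((∫ x, f x ∂μ.im.toJordanDecomposition.posPart)
      - ∫ x, f x ∂μ.im.toJordanDecomposition.negPart)

/-- `e^{2πi⟨j,x⟩}` for `j ∈ ℤ^d`, `x ∈ 𝕋^d`. -/
noncomputable def charTd {d : ℕ} (j : Fin d → ℤ) (x : Fin d → UnitAddCircle) : ℂ :=
  ∏ i, fourier (j i) (x i)

/-- Fourier–Stieltjes coefficients of a finite complex measure on `𝕋^d`. -/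
noncomputable def fourierCoeffTd {d : ℕ}
    (μ : MeasureTheory.ComplexMeasure (Fin d → UnitAddCircle)) (j : Fin d → ℤ) : ℂ :=
  cInt μ (fun t => charTd (fun i => -(j i)) t)

/-- The set of lattice points in the closed Euclidean ball of radius `N`. -/
noncomputable def latticeBall (d : ℕ) (N : ℕ) : Finset (Fin d → ℤ) :=
  (Fintype.piFinset fun _ : Fin d => Finset.Icc (-(N : ℤ)) (N : ℤ)).filter
    (fun k => ∑ i, (k i) ^ 2 ≤ (N : ℤ) ^ 2)

/-- The Bochner–Riesz normalizing constant `β_N^{d,δ}`. -/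
noncomputable def bochnerRieszConst (d : ℕ) (δ : ℝ) (N : ℕ) : ℝ :=
  ∑ k ∈ latticeBall d N, (1 - (∑ i, ((k i : ℝ)) ^ 2) / (N : ℝ) ^ 2) ^ δ

open Finset

lemma norm_fourier' {T : ℝ} (n : ℤ) (w : AddCircle T) : ‖(fourier n w : ℂ)‖ = 1 := by
  rw [fourier_apply]
  exact Circle.norm_coe _

lemma fourier_ne_zero {T : ℝ} (n : ℤ) (w : AddCircle T) : (fourier n w : ℂ) ≠ 0 := by
  intro h
  have := norm_fourier' n w
  rw [h] at this; simp at this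

lemma fourier_zpow {T : ℝ} (m : ℤ) (w : AddCircle T) :
    (fourier m w : ℂ) = (fourier 1 w : ℂ) ^ m := by
  set z := (fourier 1 w : ℂ) with hz
  have hz0 : z ≠ 0 := fourier_ne_zero 1 w
  induction m using Int.induction_on with
  | zero => simpa using (fourier_zero (x := w))
  | succ k ih =>
      have : ((k : ℤ) + 1) = (k : ℤ) + 1 := rfl
      rw [fourier_add, ih, zpow_add₀ hz0, zpow_one]
  | pred k ih =>
      have h1 : (-(k : ℤ) - 1) = (-(k:ℤ)) + (-1) := by ring
      rw [h1, fourier_add, ih, zpow_add₀ hz0]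
      congr 1
      rw [zpow_neg_one]
      have hmul : (fourier (-1) w : ℂ) * z = 1 := by
        rw [← fourier_add]; simpa using (fourier_zero (x := w))
      field_simp at hmul ⊢
      linear_combination hmul

lemma fourier_mul_sub {T : ℝ} (m : ℤ) (xx tt : AddCircle T) :
    (fourier (-m) tt : ℂ) * fourier m xx = fourier m (xx - tt) := by
  simp only [fourier_apply]
  rw [← Circle.coe_mul, ← AddCircle.toCircle_add]
  congr 2
  rw [smul_sub, neg_smul]
  abel

lemma charTd_mul_conj {d : ℕ} (j : Fin d → ℤ) (x t : Fin d → UnitAddCircle) :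
    charTd (fun l => -(j l)) t * charTd j x = charTd j (fun l => x l - t l) := by
  unfold charTd
  rw [← Finset.prod_mul_distrib]
  exact Finset.prod_congr rfl fun l _ => fourier_mul_sub (j l) (x l) (t l)

lemma norm_charTd {d : ℕ} (j : Fin d → ℤ) (x : Fin d → UnitAddCircle) : ‖charTd j x‖ = 1 := by
  unfold charTd
  rw [norm_prod]
  simp only [norm_fourier', Finset.prod_const_one]

lemma continuous_charTd {d : ℕ} (j : Fin d → ℤ) : Continuous (charTd j) := by
  unfold charTd
  exact continuous_finset_prod _ fun i _ => (fourier (j i)).continuous.comp (continuous_apply i)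

lemma fourier_one_ne_one {w : UnitAddCircle} (hw : w ≠ 0) : (fourier 1 w : ℂ) ≠ 1 := by
  intro h
  rw [fourier_one] at h
  apply hw
  have h2 : (AddCircle.toCircle w : Circle) = AddCircle.toCircle (0 : UnitAddCircle) := by
    apply Subtype.coe_injective
    show (AddCircle.toCircle w : ℂ) = (AddCircle.toCircle (0:UnitAddCircle) : ℂ)
    rw [h]
    exact (fourier_zero' (T := 1)).symm
  exact AddCircle.injective_toCircle one_ne_zero h2

lemma geom_partial_bound (z : ℂ) (hz : ‖z‖ = 1) (hz1 : z ≠ 1) (n : ℕ) :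
    ‖∑ k ∈ range n, z ^ k‖ ≤ 2 / ‖1 - z‖ := by
  have h3 : 0 < ‖1 - z‖ := by
    rw [norm_pos_iff, sub_ne_zero]; exact fun h => hz1 h.symm
  rw [geom_sum_eq hz1 n, norm_div, norm_sub_rev z 1]
  have h2 : ‖z ^ n - 1‖ ≤ 2 := by
    calc ‖z ^ n - 1‖ ≤ ‖z ^ n‖ + ‖(1:ℂ)‖ := norm_sub_le _ _
    _ = 2 := by rw [norm_pow, hz]; norm_num
  gcongr

lemma abel_nat (f : ℕ → ℝ) (hpos : ∀ n, 0 ≤ f n) (hmono : ∀ a b : ℕ, a ≤ b → f b ≤ f a)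
    (h1 : f 0 ≤ 1) (z : ℂ) (hz : ‖z‖ = 1) (hz1 : z ≠ 1) (m : ℕ) :
    ‖∑ k ∈ range m, (f k : ℂ) * z ^ k‖ ≤ 2 / ‖1 - z‖ := by
  set M := 2 / ‖1 - z‖ with hM
  have hM0 : 0 ≤ M := by positivity
  have hG : ∀ n, ‖∑ k ∈ range n, z ^ k‖ ≤ M := geom_partial_bound z hz hz1
  rcases Nat.eq_zero_or_pos m with rfl | hm
  · simpa using hM0
  have key := Finset.sum_range_by_parts (fun k => ((f k : ℂ))) (fun k => z ^ k) m
  simp only [smul_eq_mul] at key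
  rw [key]
  have hb : ‖((f (m-1) : ℂ)) * ∑ i ∈ range m, z ^ i‖ ≤ f (m-1) * M := by
    rw [norm_mul, Complex.norm_real, Real.norm_eq_abs, abs_of_nonneg (hpos _)]
    exact mul_le_mul_of_nonneg_left (hG m) (hpos _)
  have hc : ‖∑ i ∈ range (m-1), (((f (i+1) : ℂ)) - (f i : ℂ)) * ∑ k ∈ range (i+1), z ^ k‖
      ≤ (f 0 - f (m-1)) * M := by
    calc ‖∑ i ∈ range (m-1), (((f (i+1) : ℂ)) - (f i : ℂ)) * ∑ k ∈ range (i+1), z ^ k‖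
        ≤ ∑ i ∈ range (m-1), ‖(((f (i+1) : ℂ)) - (f i : ℂ)) * ∑ k ∈ range (i+1), z ^ k‖ :=
          norm_sum_le _ _
      _ ≤ ∑ i ∈ range (m-1), (f i - f (i+1)) * M := by
          apply Finset.sum_le_sum
          intro i _
          rw [norm_mul]
          have hstep : f (i+1) ≤ f i := hmono i (i+1) (Nat.le_succ i)
          have : ‖((f (i+1) : ℂ)) - (f i : ℂ)‖ = f i - f (i+1) := by
            rw [← Complex.ofReal_sub, Complex.norm_real, Real.norm_eq_abs,
              abs_of_nonpos (by linarith)]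
            ring
          rw [this]
          exact mul_le_mul_of_nonneg_left (hG (i+1)) (by linarith)
      _ = (f 0 - f (m-1)) * M := by
          rw [← Finset.sum_mul, Finset.sum_range_sub' f (m-1)]
  calc ‖_ - _‖ ≤ ‖((f (m-1) : ℂ)) * ∑ i ∈ range m, z ^ i‖
        + ‖∑ i ∈ range (m-1), (((f (i+1) : ℂ)) - (f i : ℂ)) * ∑ k ∈ range (i+1), z ^ k‖ :=
      norm_sub_le _ _
    _ ≤ f (m-1) * M + (f 0 - f (m-1)) * M := add_le_add hb hc
    _ = f 0 * M := by ring
    _ ≤ 1 * M := mul_le_mul_of_nonneg_right h1 hM0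
    _ = M := one_mul M

lemma int_Icc_split (N : ℕ) (F : ℤ → ℂ) :
    ∑ n ∈ Finset.Icc (-(N:ℤ)) N, F n
      = ∑ k ∈ range (N+1), F ((k:ℤ)) + ∑ k ∈ range N, F (-((k:ℤ)+1)) := by
  have h1 : Finset.Icc (-(N:ℤ)) N
      = ((range (N+1)).image (fun k : ℕ => (k:ℤ)))
        ∪ ((range N).image (fun k : ℕ => (-(k+1) : ℤ))) := by
    ext n
    simp only [Finset.mem_Icc, Finset.mem_union, Finset.mem_image, Finset.mem_range]
    constructor
    · rintro ⟨ha, hb⟩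
      rcases le_or_gt 0 n with h | h
      · exact Or.inl ⟨n.toNat, by omega, by omega⟩
      · exact Or.inr ⟨(-n-1).toNat, by omega, by omega⟩
    · rintro (⟨k, hk, rfl⟩ | ⟨k, hk, rfl⟩) <;> omega
  have hdisj : Disjoint ((range (N+1)).image (fun k : ℕ => (k:ℤ)))
      ((range N).image (fun k : ℕ => (-(k+1) : ℤ))) := by
    rw [Finset.disjoint_left]
    intro a ha hb
    simp only [Finset.mem_image, Finset.mem_range] at ha hb
    obtain ⟨k, _, rfl⟩ := ha
    obtain ⟨k', _, hk'⟩ := hb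
    omega
  rw [h1, Finset.sum_union hdisj, Finset.sum_image (by intro a _ b _ hab; simp only at hab; omega),
    Finset.sum_image (by intro a _ b _ hab; simp only at hab; omega)]

lemma abel_int (h : ℤ → ℝ) (hsym : ∀ n : ℤ, h (-n) = h n) (hpos : ∀ n, 0 ≤ h n)
    (h1 : h 0 ≤ 1) (hmono : ∀ a b : ℕ, a ≤ b → h b ≤ h a)
    (z : ℂ) (hz : ‖z‖ = 1) (hz1 : z ≠ 1) (N : ℕ) :
    ‖∑ n ∈ Finset.Icc (-(N:ℤ)) N, (h n : ℂ) * z ^ n‖ ≤ 4 / ‖1 - z‖ := by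
  have hz0 : z ≠ 0 := by intro hh; rw [hh] at hz; simp at hz
  rw [int_Icc_split N (fun n => (h n : ℂ) * z ^ n)]
  have half1 : ‖∑ k ∈ range (N+1), (h k : ℂ) * z ^ (k:ℤ)‖ ≤ 2 / ‖1 - z‖ := by
    have he : ∀ k ∈ range (N+1), (h k : ℂ) * z ^ (k:ℤ) = (h k : ℂ) * z ^ k := by
      intro k _; rw [zpow_natCast]
    rw [Finset.sum_congr rfl he]
    exact abel_nat (fun k => h k) (fun n => hpos _) (fun a b hab => hmono a b hab) h1 z hz hz1 _
  have hinv_norm : ‖1 - z⁻¹‖ = ‖1 - z‖ := by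
    have hzz : (1 : ℂ) - z⁻¹ = z⁻¹ * (z - 1) := by field_simp
    rw [hzz, norm_mul, norm_inv, hz, norm_sub_rev]
    norm_num
  have half2 : ‖∑ k ∈ range N, (h (-((k:ℤ)+1)) : ℂ) * z ^ (-((k:ℤ)+1))‖ ≤ 2 / ‖1 - z‖ := by
    have heq : ∀ k ∈ range N, (h (-((k:ℤ)+1)) : ℂ) * z ^ (-((k:ℤ)+1))
        = z⁻¹ * ((h ((k:ℕ)+1) : ℂ) * (z⁻¹) ^ k) := by
      intro k _
      have e1 : h (-((k:ℤ)+1)) = h (((k:ℕ)+1 : ℕ)) := by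
        rw [hsym ((k:ℤ)+1)]; norm_cast
      have e2 : z ^ (-((k:ℤ)+1)) = (z⁻¹) ^ (k+1) := by
        rw [zpow_neg, ← inv_zpow]
        norm_cast
      rw [e1, e2, pow_succ]
      push_cast
      ring
    rw [Finset.sum_congr rfl heq, ← Finset.mul_sum, norm_mul, norm_inv, hz, inv_one, one_mul]
    have hzi1 : z⁻¹ ≠ 1 := by
      intro hh; exact hz1 (by rw [← inv_inv z, hh, inv_one])
    have := abel_nat (fun k => h ((k:ℕ)+1)) (fun n => hpos _)
      (fun a b hab => hmono (a+1) (b+1) (by omega)) ((hmono 0 1 (by omega)).trans h1)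
      z⁻¹ (by rw [norm_inv, hz]; norm_num) hzi1 N
    rw [hinv_norm] at this
    exact this
  calc ‖_ + _‖ ≤ _ + _ := norm_add_le _ _
    _ ≤ 2 / ‖1 - z‖ + 2 / ‖1 - z‖ := by
        apply add_le_add
        · exact half1
        · exact half2
    _ = 4 / ‖1 - z‖ := by ring

lemma sum_piFinset_split {d : ℕ} (i : Fin d) (s : Finset ℤ) (F : (Fin d → ℤ) → ℂ) :
    ∑ j ∈ Fintype.piFinset (fun _ : Fin d => s), F j
      = ∑ j' ∈ Fintype.piFinset (fun l : Fin d => if l = i then ({0} : Finset ℤ) else s),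
          ∑ n ∈ s, F (Function.update j' i n) := by
  rw [← Finset.sum_product']
  refine Finset.sum_nbij' (i := fun j => ((Function.update j i 0, j i) : (Fin d → ℤ) × ℤ))
    (j := fun p => Function.update p.1 i p.2) ?_ ?_ ?_ ?_ ?_
  · intro j hj
    rw [Fintype.mem_piFinset] at hj
    rw [Finset.mem_product]
    constructor
    · rw [Fintype.mem_piFinset]
      intro l
      by_cases hl : l = i
      · subst hl; simp
      · simp [Function.update_of_ne hl, hl, hj l]
    · exact hj i
  · intro p hp
    rw [Finset.mem_product] at hp
    obtain ⟨hp1, hp2⟩ := hp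
    rw [Fintype.mem_piFinset] at hp1 ⊢
    intro l
    by_cases hl : l = i
    · subst hl; simpa using hp2
    · have := hp1 l
      simp only [hl, if_false] at this
      simpa [Function.update_of_ne hl] using this
  · intro j _
    simp [Function.update_idem, Function.update_eq_self]
  · intro p hp
    rw [Finset.mem_product] at hp
    obtain ⟨hp1, _⟩ := hp
    rw [Fintype.mem_piFinset] at hp1
    have h0 : p.1 i = 0 := by simpa using hp1 i
    ext
    · simp only [Function.update_idem]
      rw [← h0, Function.update_eq_self]
    · simp
  · intro j _
    simp [Function.update_idem, Function.update_eq_self]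

lemma div_sq_mem01 {S c : ℝ} (hS0 : 0 ≤ S) (hc : 0 ≤ c) (hSc : S ≤ c) :
    0 ≤ S / c ∧ S / c ≤ 1 := by
  rcases eq_or_lt_of_le hc with h | h
  · rw [← h]
    simp
  · exact ⟨div_nonneg hS0 (le_of_lt h), (div_le_one h).mpr hSc⟩

lemma sum_sq_cast {d : ℕ} (j : Fin d → ℤ) :
    ∑ l, ((j l : ℝ))^2 = ((∑ l, (j l)^2 : ℤ) : ℝ) := by push_cast; rfl

lemma sum_sq_nonneg_int {d : ℕ} (j : Fin d → ℤ) : (0:ℤ) ≤ ∑ l, (j l)^2 :=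
  Finset.sum_nonneg fun l _ => sq_nonneg _

lemma brWeight_mem01 {d N : ℕ} {δ : ℝ} (hδ : 0 ≤ δ) {j : Fin d → ℤ}
    (hj : ∑ l, (j l)^2 ≤ (N:ℤ)^2) :
    0 ≤ (1 - (∑ l, ((j l : ℝ))^2)/(N:ℝ)^2) ^ δ ∧ (1 - (∑ l, ((j l : ℝ))^2)/(N:ℝ)^2) ^ δ ≤ 1 := by
  have hS0 : (0:ℝ) ≤ ∑ l, ((j l : ℝ))^2 := Finset.sum_nonneg fun l _ => sq_nonneg _
  have hSc : ∑ l, ((j l : ℝ))^2 ≤ (N:ℝ)^2 := by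
    rw [sum_sq_cast]
    exact_mod_cast hj
  obtain ⟨hq0, hq1⟩ := div_sq_mem01 hS0 (by positivity) hSc
  constructor
  · exact Real.rpow_nonneg (by linarith) δ
  · exact Real.rpow_le_one (by linarith) (by linarith) hδ

lemma zero_mem_latticeBall (d N : ℕ) : (fun _ => 0 : Fin d → ℤ) ∈ latticeBall d N := by
  rw [latticeBall, Finset.mem_filter]
  constructor
  · rw [Fintype.mem_piFinset]
    intro l
    simp [Finset.mem_Icc]
  · simp

lemma one_le_bochnerRieszConst (d N : ℕ) {δ : ℝ} (hδ : 0 ≤ δ) :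
    1 ≤ bochnerRieszConst d δ N := by
  rw [bochnerRieszConst]
  have h0 : ((fun _ => 0 : Fin d → ℤ)) ∈ latticeBall d N := zero_mem_latticeBall d N
  have := Finset.single_le_sum (f := fun k : Fin d → ℤ =>
    (1 - (∑ i, ((k i : ℝ)) ^ 2) / (N : ℝ) ^ 2) ^ δ) ?_ h0
  · calc (1:ℝ) = (1 - (∑ i : Fin d, ((0:ℝ)) ^ 2) / (N : ℝ) ^ 2) ^ δ := by
          simp
      _ ≤ _ := by simpa using this
  · intro k hk
    rw [latticeBall, Finset.mem_filter] at hk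
    exact (brWeight_mem01 hδ hk.2).1

lemma bochnerRieszConst_pos (d N : ℕ) {δ : ℝ} (hδ : 0 ≤ δ) :
    0 < bochnerRieszConst d δ N :=
  lt_of_lt_of_le one_pos (one_le_bochnerRieszConst d N hδ)

lemma bochnerRieszConst_lower (d N : ℕ) {δ : ℝ} (hδ : 0 ≤ δ) (hd : 0 < d) :
    ((3/4:ℝ))^δ * (((N/(2*d) + 1 : ℕ)) : ℝ)^d ≤ bochnerRieszConst d δ N := by
  classical
  obtain ⟨m, hm⟩ : ∃ m, m = N/(2*d) := ⟨_, rfl⟩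
  rw [← hm]
  have hmN : 2*d*m ≤ N := by
    rw [hm, mul_comm]
    exact Nat.div_mul_le_self N (2*d)
  -- the cube [0,m]^d is inside the ball
  set T : Finset (Fin d → ℤ) := Fintype.piFinset (fun _ : Fin d => Finset.Icc (0:ℤ) m) with hT
  have hsub : T ⊆ latticeBall d N := by
    intro k hk
    rw [hT, Fintype.mem_piFinset] at hk
    have hbound : ∀ l, 0 ≤ k l ∧ k l ≤ (m:ℤ) := by
      intro l; have := hk l; rw [Finset.mem_Icc] at this; exact this
    rw [latticeBall, Finset.mem_filter]
    constructor
    · rw [Fintype.mem_piFinset]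
      intro l
      rw [Finset.mem_Icc]
      have := hbound l
      have hmN' : (m:ℤ) ≤ N := by
        have : m ≤ N := hm ▸ Nat.div_le_self N (2*d)
        exact_mod_cast this
      omega
    · have hsq : ∀ l, (k l)^2 ≤ (m:ℤ)^2 := by
        intro l
        have := hbound l
        nlinarith [this.1, this.2]
      have h1 : ∑ l, (k l)^2 ≤ (d:ℤ) * (m:ℤ)^2 := by
        calc ∑ l, (k l)^2 ≤ ∑ _l : Fin d, (m:ℤ)^2 := Finset.sum_le_sum (fun l _ => hsq l)
          _ = (d:ℤ) * (m:ℤ)^2 := by simp [mul_comm]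
      have h2 : (2*(d:ℤ)*(m:ℤ)) ≤ (N:ℤ) := by exact_mod_cast hmN
      have hd' : (1:ℤ) ≤ d := by exact_mod_cast hd
      have hd0 : (0:ℤ) ≤ (d:ℤ) := by positivity
      have h2' : (0:ℤ) ≤ 2*(d:ℤ)*(m:ℤ) := by positivity
      have h4 : 4*(d:ℤ)^2*(m:ℤ)^2 ≤ (N:ℤ)^2 := by nlinarith [h2, h2']
      have hx : (0:ℤ) ≤ (d:ℤ) * (4*(d:ℤ)-1) * (m:ℤ)^2 :=
        mul_nonneg (mul_nonneg hd0 (by linarith)) (sq_nonneg _)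
      nlinarith [h4, hx, h1]
  -- each weight on the cube is at least (3/4)^δ
  have hwlow : ∀ k ∈ T, ((3/4:ℝ))^δ ≤ (1 - (∑ i, ((k i : ℝ)) ^ 2) / (N : ℝ) ^ 2) ^ δ := by
    intro k hk
    rw [hT, Fintype.mem_piFinset] at hk
    have hbound : ∀ l, 0 ≤ k l ∧ k l ≤ (m:ℤ) := by
      intro l; have := hk l; rw [Finset.mem_Icc] at this; exact this
    have hq : (∑ i, ((k i : ℝ)) ^ 2) / (N : ℝ) ^ 2 ≤ 1/4 := by
      rcases Nat.eq_zero_or_pos N with hN0 | hNpos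
      · subst hN0
        have hm0 : m = 0 := by rw [hm]; simp
        have hz : ∀ l, k l = 0 := by
          intro l
          have hb := hbound l
          rw [hm0] at hb
          norm_num at hb
          omega
        simp [hz]
      · have hS : (∑ i, ((k i : ℝ)) ^ 2) ≤ (d:ℝ) * (m:ℝ)^2 := by
          have hsq : ∀ l, ((k l : ℝ))^2 ≤ ((m:ℝ))^2 := by
            intro l
            have := hbound l
            have h1 : (0:ℝ) ≤ (k l : ℝ) := by exact_mod_cast this.1
            have h2 : ((k l:ℝ)) ≤ (m:ℝ) := by exact_mod_cast this.2
            nlinarith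
          calc (∑ i, ((k i : ℝ)) ^ 2) ≤ ∑ _i : Fin d, ((m:ℝ))^2 :=
                Finset.sum_le_sum (fun l _ => hsq l)
            _ = (d:ℝ) * ((m:ℝ))^2 := by simp [mul_comm]
        have hN2 : (0:ℝ) < (N:ℝ)^2 := by positivity
        rw [div_le_iff₀ hN2]
        have h2 : (2*(d:ℝ)*(m:ℝ)) ≤ (N:ℝ) := by exact_mod_cast hmN
        have hd' : (1:ℝ) ≤ (d:ℝ) := by exact_mod_cast hd
        have hd0 : (0:ℝ) ≤ (d:ℝ) := by positivity
        have h2' : (0:ℝ) ≤ 2*(d:ℝ)*(m:ℝ) := by positivity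
        have h4 : 4*(d:ℝ)^2*(m:ℝ)^2 ≤ (N:ℝ)^2 := by nlinarith [h2, h2']
        have hx : (0:ℝ) ≤ (d:ℝ) * ((d:ℝ)-1) * (m:ℝ)^2 :=
          mul_nonneg (mul_nonneg hd0 (by linarith)) (sq_nonneg _)
        nlinarith [h4, hx, hS]
    have hq0 : 0 ≤ (∑ i, ((k i : ℝ)) ^ 2) / (N : ℝ) ^ 2 := by positivity
    apply Real.rpow_le_rpow (by norm_num) (by linarith) hδ
  -- conclude
  have hTcard : (T.card : ℝ) = (((m + 1 : ℕ)) : ℝ)^d := by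
    rw [hT, Fintype.card_piFinset]
    simp only [Int.card_Icc]
    have : ((m:ℤ) + 1 - 0).toNat = m + 1 := by
      rw [sub_zero]
      exact_mod_cast Int.toNat_natCast (m+1)
    rw [this]
    push_cast
    simp
  calc ((3/4:ℝ))^δ * (((m + 1 : ℕ)) : ℝ)^d
      = ∑ _k ∈ T, ((3/4:ℝ))^δ := by
        rw [Finset.sum_const, nsmul_eq_mul, ← hTcard]
        ring
    _ ≤ ∑ k ∈ T, (1 - (∑ i, ((k i : ℝ)) ^ 2) / (N : ℝ) ^ 2) ^ δ :=
        Finset.sum_le_sum hwlow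
    _ ≤ bochnerRieszConst d δ N := by
        rw [bochnerRieszConst]
        apply Finset.sum_le_sum_of_subset_of_nonneg hsub
        intro k hk _
        rw [latticeBall, Finset.mem_filter] at hk
        exact (brWeight_mem01 hδ hk.2).1

lemma inner_slice_bound {d N : ℕ} {δ : ℝ} (hδ : 0 ≤ δ) (z : Fin d → ℂ)
    (hz_norm : ∀ l, ‖z l‖ = 1) (i : Fin d) (hzi : z i ≠ 1)
    (j' : Fin d → ℤ) (hj'i : j' i = 0) :
    ‖∑ n ∈ Finset.Icc (-(N:ℤ)) N,
        (if (∑ l, (Function.update j' i n l)^2 ≤ (N:ℤ)^2) then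
          (((1 - (∑ l, ((Function.update j' i n l : ℝ)) ^ 2) / (N : ℝ) ^ 2) ^ δ : ℝ) : ℂ)
            * ∏ l, (z l) ^ (Function.update j' i n l)
        else 0)‖ ≤ 4 / ‖1 - z i‖ := by
  classical
  set S : ℤ := ∑ l ∈ Finset.univ.erase i, (j' l)^2 with hS
  have hS0 : (0:ℤ) ≤ S := Finset.sum_nonneg fun l _ => sq_nonneg _
  have hSsum : ∀ n : ℤ, ∑ l, (Function.update j' i n l)^2 = n^2 + S := by
    intro n
    rw [← Finset.add_sum_erase _ _ (Finset.mem_univ i), Function.update_self]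
    congr 1
    apply Finset.sum_congr rfl
    intro l hl
    rw [Function.update_of_ne (Finset.ne_of_mem_erase hl)]
  have hSsumR : ∀ n : ℤ, ∑ l, ((Function.update j' i n l : ℝ))^2 = (n:ℝ)^2 + (S:ℝ) := by
    intro n
    have := hSsum n
    calc ∑ l, ((Function.update j' i n l : ℝ))^2
        = ((∑ l, (Function.update j' i n l)^2 : ℤ) : ℝ) := by push_cast; rfl
      _ = (n:ℝ)^2 + (S:ℝ) := by rw [this]; push_cast; ring
  set c : ℂ := ∏ l ∈ Finset.univ.erase i, (z l) ^ (j' l) with hc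
  have hcnorm : ‖c‖ = 1 := by
    rw [hc, norm_prod]
    apply Finset.prod_eq_one
    intro l _
    rw [norm_zpow, hz_norm l, one_zpow]
  set h : ℤ → ℝ := fun n =>
    if n^2 + S ≤ (N:ℤ)^2 then (1 - ((n:ℝ)^2 + (S:ℝ))/(N:ℝ)^2) ^ δ else 0 with hh
  have hprod : ∀ n : ℤ, ∏ l, (z l) ^ (Function.update j' i n l) = (z i) ^ n * c := by
    intro n
    rw [← Finset.mul_prod_erase _ _ (Finset.mem_univ i), Function.update_self]
    congr 1
    apply Finset.prod_congr rfl
    intro l hl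
    rw [Function.update_of_ne (Finset.ne_of_mem_erase hl)]
  have hterm : ∀ n ∈ Finset.Icc (-(N:ℤ)) N,
      (if (∑ l, (Function.update j' i n l)^2 ≤ (N:ℤ)^2) then
          (((1 - (∑ l, ((Function.update j' i n l : ℝ)) ^ 2) / (N : ℝ) ^ 2) ^ δ : ℝ) : ℂ)
            * ∏ l, (z l) ^ (Function.update j' i n l)
        else 0)
      = ((h n : ℝ) : ℂ) * (z i) ^ n * c := by
    intro n _
    rw [hSsum n, hSsumR n, hprod n]
    simp only [hh]
    by_cases hcond : n^2 + S ≤ (N:ℤ)^2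
    · rw [if_pos hcond, if_pos hcond]
      push_cast
      ring
    · rw [if_neg hcond, if_neg hcond]
      simp
  rw [Finset.sum_congr rfl hterm]
  have hfact : ∑ n ∈ Finset.Icc (-(N:ℤ)) N, ((h n : ℝ) : ℂ) * (z i) ^ n * c
      = (∑ n ∈ Finset.Icc (-(N:ℤ)) N, ((h n : ℝ) : ℂ) * (z i) ^ n) * c := by
    rw [Finset.sum_mul]
  rw [hfact, norm_mul, hcnorm, mul_one]
  -- properties of h
  have hq : ∀ n : ℤ, n^2 + S ≤ (N:ℤ)^2 →
      0 ≤ ((n:ℝ)^2 + (S:ℝ))/(N:ℝ)^2 ∧ ((n:ℝ)^2 + (S:ℝ))/(N:ℝ)^2 ≤ 1 := by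
    intro n hn
    have h1 : (0:ℝ) ≤ (n:ℝ)^2 + (S:ℝ) := by positivity
    have h2 : ((n:ℝ)^2 + (S:ℝ)) ≤ (N:ℝ)^2 := by exact_mod_cast hn
    exact div_sq_mem01 h1 (by positivity) h2
  have hpos : ∀ n : ℤ, 0 ≤ h n := by
    intro n
    simp only [hh]
    by_cases hcond : n^2 + S ≤ (N:ℤ)^2
    · rw [if_pos hcond]
      obtain ⟨hq0, hq1⟩ := hq n hcond
      exact Real.rpow_nonneg (by linarith) δ
    · rw [if_neg hcond]
  have hsym : ∀ n : ℤ, h (-n) = h n := by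
    intro n
    simp only [hh]
    push_cast
    simp only [neg_sq]
  have h1 : h 0 ≤ 1 := by
    simp only [hh]
    by_cases hcond : (0:ℤ)^2 + S ≤ (N:ℤ)^2
    · rw [if_pos hcond]
      obtain ⟨hq0, hq1⟩ := hq 0 hcond
      exact Real.rpow_le_one (by linarith) (by linarith) hδ
    · rw [if_neg hcond]; norm_num
  have hmono : ∀ a b : ℕ, a ≤ b → h b ≤ h a := by
    intro a b hab
    simp only [hh]
    by_cases hcondb : ((b:ℕ):ℤ)^2 + S ≤ (N:ℤ)^2
    · have hconda : ((a:ℕ):ℤ)^2 + S ≤ (N:ℤ)^2 := by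
        have hab' : ((a:ℕ):ℤ) ≤ ((b:ℕ):ℤ) := by exact_mod_cast hab
        have h0a : (0:ℤ) ≤ ((a:ℕ):ℤ) := Int.natCast_nonneg a
        nlinarith
      rw [if_pos hcondb, if_pos hconda]
      obtain ⟨hqb0, hqb1⟩ := hq _ hcondb
      obtain ⟨hqa0, hqa1⟩ := hq _ hconda
      apply Real.rpow_le_rpow (by linarith) ?_ hδ
      have hsq : ((a:ℝ))^2 ≤ ((b:ℝ))^2 := by
        have ha0 : (0:ℝ) ≤ (a:ℝ) := by positivity
        have hab' : (a:ℝ) ≤ (b:ℝ) := by exact_mod_cast hab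
        nlinarith
      push_cast
      rcases Nat.eq_zero_or_pos N with hN0 | hNpos
      · subst hN0
        norm_num
      · have hN2 : (0:ℝ) < (N:ℝ)^2 := by positivity
        have hdiv : ((a:ℝ)^2 + (S:ℝ))/(N:ℝ)^2 ≤ ((b:ℝ)^2 + (S:ℝ))/(N:ℝ)^2 := by
          gcongr
        linarith
    · rw [if_neg hcondb]
      exact hpos _
  have := abel_int h hsym hpos h1 hmono (z i) (hz_norm i) hzi N
  exact this

lemma slice_card {d N : ℕ} (i : Fin d) :
    ((Fintype.piFinset (fun l : Fin d => if l = i then ({0} : Finset ℤ)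
        else Finset.Icc (-(N:ℤ)) N)).card : ℝ) = ((2*N+1 : ℕ) : ℝ)^(d-1) := by
  classical
  rw [Fintype.card_piFinset]
  have hcard : ∀ l : Fin d, ((if l = i then ({0} : Finset ℤ) else Finset.Icc (-(N:ℤ)) N)).card
      = if l = i then 1 else (2*N+1) := by
    intro l
    by_cases hl : l = i
    · simp [hl]
    · simp only [hl, if_false]
      rw [Int.card_Icc]
      have : ((N:ℤ) + 1 - -(N:ℤ)).toNat = 2*N+1 := by omega
      rw [this]
  rw [Finset.prod_congr rfl (fun l _ => hcard l)]
  rw [← Finset.mul_prod_erase _ _ (Finset.mem_univ i), if_pos rfl, one_mul]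
  have hconst : ∀ l ∈ Finset.univ.erase i, (if l = i then 1 else (2*N+1)) = 2*N+1 := by
    intro l hl
    rw [if_neg (Finset.ne_of_mem_erase hl)]
  rw [Finset.prod_congr rfl hconst, Finset.prod_const]
  rw [Finset.card_erase_of_mem (Finset.mem_univ i), Finset.card_univ, Fintype.card_fin]
  push_cast
  ring

lemma kernel_sum_bound {d N : ℕ} {δ : ℝ} (hδ : 0 ≤ δ) (z : Fin d → ℂ)
    (hz_norm : ∀ l, ‖z l‖ = 1) (i : Fin d) (hzi : z i ≠ 1) :
    ‖∑ j ∈ latticeBall d N,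
        (((1 - (∑ l, ((j l : ℝ)) ^ 2) / (N : ℝ) ^ 2) ^ δ : ℝ) : ℂ) * ∏ l, (z l) ^ (j l)‖
      ≤ ((2*N+1 : ℕ) : ℝ)^(d-1) * (4 / ‖1 - z i‖) := by
  classical
  rw [latticeBall, Finset.sum_filter]
  rw [sum_piFinset_split i (Finset.Icc (-(N:ℤ)) N)]
  refine le_trans (norm_sum_le _ _) ?_
  have hinner : ∀ j' ∈ Fintype.piFinset (fun l : Fin d => if l = i then ({0} : Finset ℤ)
      else Finset.Icc (-(N:ℤ)) N),
      ‖∑ n ∈ Finset.Icc (-(N:ℤ)) N,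
        (if (∑ l, (Function.update j' i n l)^2 ≤ (N:ℤ)^2) then
          (((1 - (∑ l, ((Function.update j' i n l : ℝ)) ^ 2) / (N : ℝ) ^ 2) ^ δ : ℝ) : ℂ)
            * ∏ l, (z l) ^ (Function.update j' i n l)
        else 0)‖ ≤ 4 / ‖1 - z i‖ := by
    intro j' hj'
    rw [Fintype.mem_piFinset] at hj'
    have hj'i : j' i = 0 := by simpa using hj' i
    exact inner_slice_bound hδ z hz_norm i hzi j' hj'i
  calc ∑ j' ∈ _, ‖_‖ ≤ ∑ _j' ∈ Fintype.piFinset (fun l : Fin d => if l = i then ({0} : Finset ℤ)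
        else Finset.Icc (-(N:ℤ)) N), (4 / ‖1 - z i‖) := Finset.sum_le_sum hinner
    _ = ((2*N+1 : ℕ) : ℝ)^(d-1) * (4 / ‖1 - z i‖) := by
        rw [Finset.sum_const, nsmul_eq_mul, slice_card i]

lemma kernel_decay {d : ℕ} {δ : ℝ} (hδ : 0 ≤ δ) (x t : Fin d → UnitAddCircle) (i : Fin d)
    (hti : t i ≠ x i) :
    Tendsto (fun N : ℕ => ((bochnerRieszConst d δ N : ℝ) : ℂ)⁻¹ *
      ∑ j ∈ latticeBall d N, (((1 - (∑ l, ((j l : ℝ)) ^ 2) / (N : ℝ) ^ 2) ^ δ : ℝ) : ℂ) *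
        charTd (fun l => -(j l)) t * charTd j x) atTop (𝓝 0) := by
  classical
  have hd : 0 < d := i.pos
  set y : Fin d → UnitAddCircle := fun l => x l - t l with hy
  set z : Fin d → ℂ := fun l => (fourier 1 (y l) : ℂ) with hz
  have hz_norm : ∀ l, ‖z l‖ = 1 := fun l => norm_fourier' 1 (y l)
  have hzi : z i ≠ 1 := by
    apply fourier_one_ne_one
    rw [hy]
    simp only
    rw [sub_ne_zero]
    exact Ne.symm hti
  set C : ℝ := 4 / ‖1 - z i‖ with hC
  have hC0 : 0 ≤ C := by positivity
  set A : ℝ := C * ((4/3:ℝ))^δ * 2^(d-1) * ((2*d : ℕ) : ℝ)^d with hA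
  have hA0 : 0 ≤ A := by
    apply mul_nonneg (mul_nonneg (mul_nonneg hC0 _) _) _
    · exact le_of_lt (Real.rpow_pos_of_pos (by norm_num) δ)
    · positivity
    · positivity
  -- rewrite each kernel term using z
  have hterm : ∀ (N : ℕ), ∀ j ∈ latticeBall d N,
      (((1 - (∑ l, ((j l : ℝ)) ^ 2) / (N : ℝ) ^ 2) ^ δ : ℝ) : ℂ) *
        charTd (fun l => -(j l)) t * charTd j x
      = (((1 - (∑ l, ((j l : ℝ)) ^ 2) / (N : ℝ) ^ 2) ^ δ : ℝ) : ℂ) * ∏ l, (z l) ^ (j l) := by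
    intro N j _
    rw [mul_assoc, charTd_mul_conj]
    congr 1
    unfold charTd
    apply Finset.prod_congr rfl
    intro l _
    show (fourier (j l) ((x l - t l : UnitAddCircle)) : ℂ) = z l ^ (j l)
    exact fourier_zpow (j l) (x l - t l)
  rw [tendsto_zero_iff_norm_tendsto_zero]
  apply squeeze_zero (fun N => norm_nonneg _) (g := fun N : ℕ => A / ((N:ℝ)+1))
  · -- the bound
    intro N
    rw [Finset.sum_congr rfl (hterm N)]
    have hβpos := bochnerRieszConst_pos d N hδ
    have hβlow := bochnerRieszConst_lower d N hδ hd
    set b : ℝ := ((3/4:ℝ))^δ * (((N/(2*d) + 1 : ℕ)) : ℝ)^d with hb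
    have hbpos : 0 < b := by
      apply mul_pos (Real.rpow_pos_of_pos (by norm_num) δ)
      positivity
    have hK := kernel_sum_bound (N := N) hδ z hz_norm i hzi
    rw [norm_mul]
    have hnβ : ‖((bochnerRieszConst d δ N : ℝ) : ℂ)⁻¹‖ = (bochnerRieszConst d δ N)⁻¹ := by
      rw [norm_inv, Complex.norm_real, Real.norm_eq_abs, abs_of_pos hβpos]
    rw [hnβ]
    calc (bochnerRieszConst d δ N)⁻¹ * ‖_‖
        ≤ (bochnerRieszConst d δ N)⁻¹ * (((2*N+1 : ℕ) : ℝ)^(d-1) * C) := by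
          apply mul_le_mul_of_nonneg_left hK (by positivity)
      _ ≤ b⁻¹ * (((2*N+1 : ℕ) : ℝ)^(d-1) * C) := by
          apply mul_le_mul_of_nonneg_right _ (by positivity)
          exact inv_anti₀ hbpos hβlow
      _ ≤ A / ((N:ℝ)+1) := by
          have hN1 : (0:ℝ) < (N:ℝ)+1 := by positivity
          rw [inv_mul_le_iff₀ hbpos,
            show b * (A / ((N:ℝ)+1)) = b * A / ((N:ℝ)+1) from (mul_div_assoc b A _).symm,
            le_div_iff₀ hN1]
          show ((2*N+1:ℕ):ℝ)^(d-1) * C * ((N:ℝ)+1) ≤ b * A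
          have h2N : ((2*N+1:ℕ):ℝ) ≤ 2*((N:ℝ)+1) := by push_cast; linarith
          have hp1 : ((2*N+1:ℕ):ℝ)^(d-1) ≤ (2*((N:ℝ)+1))^(d-1) :=
            pow_le_pow_left₀ (by positivity) h2N _
          have hNm : ((N:ℝ)+1) ≤ ((2*d:ℕ):ℝ) * (((N/(2*d)+1:ℕ)):ℝ) := by
            have hlt : N + 1 ≤ 2*d*(N/(2*d)+1) := by
              have h1 : 2*d*(N/(2*d)) + N%(2*d) = N := Nat.div_add_mod N (2*d)
              have h2 : N % (2*d) < 2*d := Nat.mod_lt _ (by omega)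
              have h3 : 2*d*(N/(2*d)+1) = 2*d*(N/(2*d)) + 2*d := by ring
              omega
            calc ((N:ℝ)+1) = ((N+1:ℕ):ℝ) := by push_cast; ring
              _ ≤ ((2*d*(N/(2*d)+1):ℕ):ℝ) := by exact_mod_cast hlt
              _ = ((2*d:ℕ):ℝ) * (((N/(2*d)+1:ℕ)):ℝ) := by push_cast; ring
          have hpow : ((N:ℝ)+1)^d ≤ ((2*d:ℕ):ℝ)^d * (((N/(2*d)+1:ℕ)):ℝ)^d := by
            rw [← mul_pow]
            exact pow_le_pow_left₀ (by positivity) hNm d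
          have h34 : ((3/4:ℝ))^δ * ((4/3:ℝ))^δ = 1 := by
            rw [← Real.mul_rpow (by norm_num) (by norm_num)]
            norm_num
          have h2d0 : (0:ℝ) ≤ 2^(d-1) := by positivity
          calc ((2*N+1:ℕ):ℝ)^(d-1) * C * ((N:ℝ)+1)
              ≤ (2*((N:ℝ)+1))^(d-1) * C * ((N:ℝ)+1) :=
                mul_le_mul_of_nonneg_right (mul_le_mul_of_nonneg_right hp1 hC0) (le_of_lt hN1)
            _ = (2^(d-1) * C) * (((N:ℝ)+1)^(d-1) * ((N:ℝ)+1)) := by rw [mul_pow]; ring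
            _ = (2^(d-1) * C) * ((N:ℝ)+1)^d := by
                rw [← pow_succ]
                congr 2
                omega
            _ ≤ (2^(d-1) * C) * (((2*d:ℕ):ℝ)^d * (((N/(2*d)+1:ℕ)):ℝ)^d) :=
                mul_le_mul_of_nonneg_left hpow (mul_nonneg h2d0 hC0)
            _ = b * A := by
                have hexp : b * A = (((N/(2*d)+1:ℕ)):ℝ)^d * (C * 2^(d-1) * ((2*d:ℕ):ℝ)^d)
                    * (((3/4:ℝ))^δ * ((4/3:ℝ))^δ) := by
                  rw [hb, hA]; ring
                rw [hexp, h34, mul_one]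
                ring
  · -- the limit of the bound
    have h1 : Tendsto (fun N : ℕ => ((N:ℝ)+1)⁻¹) atTop (𝓝 0) := by
      apply tendsto_inv_atTop_zero.comp
      exact tendsto_atTop_add_const_right atTop 1 tendsto_natCast_atTop_atTop
    have := h1.const_mul A
    simpa [div_eq_mul_inv, mul_zero] using this

section cIntLemmas

variable {d : ℕ} (μ : MeasureTheory.ComplexMeasure (Fin d → UnitAddCircle))

lemma cInt_const_mul (a : ℂ) (f : (Fin d → UnitAddCircle) → ℂ) :
    cInt μ (fun t => a * f t) = a * cInt μ f := by
  unfold cInt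
  rw [integral_const_mul, integral_const_mul, integral_const_mul, integral_const_mul]
  ring

lemma integrable_of_continuous (ν : Measure (Fin d → UnitAddCircle)) [IsFiniteMeasure ν]
    (f : (Fin d → UnitAddCircle) → ℂ) (hf : Continuous f) : Integrable f ν :=
  hf.integrable_of_hasCompactSupport (HasCompactSupport.of_compactSpace f)

lemma cInt_finset_sum {ι : Type*} (s : Finset ι) (F : ι → (Fin d → UnitAddCircle) → ℂ)
    (hF : ∀ i ∈ s, Continuous (F i)) :
    cInt μ (fun t => ∑ i ∈ s, F i t) = ∑ i ∈ s, cInt μ (F i) := by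
  unfold cInt
  rw [integral_finset_sum s (fun i hi => integrable_of_continuous _ _ (hF i hi)),
    integral_finset_sum s (fun i hi => integrable_of_continuous _ _ (hF i hi)),
    integral_finset_sum s (fun i hi => integrable_of_continuous _ _ (hF i hi)),
    integral_finset_sum s (fun i hi => integrable_of_continuous _ _ (hF i hi))]
  simp only [Finset.sum_add_distrib, Finset.sum_sub_distrib, ← Finset.mul_sum]

end cIntLemmas

/-- **Wiener's lemma for Bochner–Riesz means on `𝕋^d`.** For a finite complex Borel
measure `μ` on `𝕋^d`, `δ ≥ 0`, and every `x ∈ 𝕋^d`,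
`μ({x}) = lim_N (1/β_N^{d,δ}) ∑_{|j|≤N} (1−|j|²/N²)_+^δ μ̂(j) e^{2πi⟨j,x⟩}`. -/
theorem wiener_lemma_bochner_riesz_Td {d : ℕ}
    (μ : MeasureTheory.ComplexMeasure (Fin d → UnitAddCircle))
    (δ : ℝ) (hδ : 0 ≤ δ) (x : Fin d → UnitAddCircle) :
    Tendsto (fun N : ℕ =>
        ((bochnerRieszConst d δ N : ℝ) : ℂ)⁻¹ *
          ∑ j ∈ latticeBall d N,
            (((1 - (∑ i, ((j i : ℝ)) ^ 2) / (N : ℝ) ^ 2) ^ δ : ℝ) : ℂ) *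
              fourierCoeffTd μ j * charTd j x)
      atTop (𝓝 (μ {x})) := by
  classical
  -- the kernel
  set g : ℕ → (Fin d → UnitAddCircle) → ℂ := fun N t =>
    ((bochnerRieszConst d δ N : ℝ) : ℂ)⁻¹ *
      ∑ j ∈ latticeBall d N,
        (((1 - (∑ i, ((j i : ℝ)) ^ 2) / (N : ℝ) ^ 2) ^ δ : ℝ) : ℂ) *
          charTd (fun l => -(j l)) t * charTd j x with hg
  -- Step A : the N-th term is cInt μ (g N)
  have hrepr : ∀ N : ℕ,
      ((bochnerRieszConst d δ N : ℝ) : ℂ)⁻¹ *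
        ∑ j ∈ latticeBall d N,
          (((1 - (∑ i, ((j i : ℝ)) ^ 2) / (N : ℝ) ^ 2) ^ δ : ℝ) : ℂ) *
            fourierCoeffTd μ j * charTd j x
      = cInt μ (g N) := by
    intro N
    rw [hg]
    simp only
    rw [cInt_const_mul]
    congr 1
    rw [cInt_finset_sum μ (latticeBall d N)
      (F := fun j t => (((1 - (∑ i, ((j i : ℝ)) ^ 2) / (N : ℝ) ^ 2) ^ δ : ℝ) : ℂ) *
          charTd (fun l => -(j l)) t * charTd j x)
      (fun j _ => by
        apply Continuous.mul _ continuous_const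
        exact continuous_const.mul (continuous_charTd _))]
    apply Finset.sum_congr rfl
    intro j _
    have hfun : (fun t => (((1 - (∑ i, ((j i : ℝ)) ^ 2) / (N : ℝ) ^ 2) ^ δ : ℝ) : ℂ) *
        charTd (fun l => -(j l)) t * charTd j x)
        = fun t => ((((1 - (∑ i, ((j i : ℝ)) ^ 2) / (N : ℝ) ^ 2) ^ δ : ℝ) : ℂ) * charTd j x) *
          charTd (fun l => -(j l)) t := by
      funext t
      ring
    rw [hfun, cInt_const_mul]
    have : cInt μ (fun t => charTd (fun l => -(j l)) t) = fourierCoeffTd μ j := rfl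
    rw [this]
    ring
  -- Step B : uniform bound ‖g N t‖ ≤ 1
  have hbound : ∀ N t, ‖g N t‖ ≤ 1 := by
    intro N t
    have hβpos := bochnerRieszConst_pos d N hδ
    rw [hg]
    simp only
    rw [norm_mul]
    have hnβ : ‖((bochnerRieszConst d δ N : ℝ) : ℂ)⁻¹‖ = (bochnerRieszConst d δ N)⁻¹ := by
      rw [norm_inv, Complex.norm_real, Real.norm_eq_abs, abs_of_pos hβpos]
    rw [hnβ]
    have hsum : ‖∑ j ∈ latticeBall d N,
        (((1 - (∑ i, ((j i : ℝ)) ^ 2) / (N : ℝ) ^ 2) ^ δ : ℝ) : ℂ) *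
          charTd (fun l => -(j l)) t * charTd j x‖ ≤ bochnerRieszConst d δ N := by
      refine le_trans (norm_sum_le _ _) ?_
      rw [bochnerRieszConst]
      apply Finset.sum_le_sum
      intro j hj
      rw [latticeBall, Finset.mem_filter] at hj
      obtain ⟨hw0, hw1⟩ := brWeight_mem01 hδ hj.2
      rw [norm_mul, norm_mul, norm_charTd, norm_charTd, Complex.norm_real, Real.norm_eq_abs,
        abs_of_nonneg hw0, mul_one, mul_one]
    calc (bochnerRieszConst d δ N)⁻¹ * ‖_‖
        ≤ (bochnerRieszConst d δ N)⁻¹ * bochnerRieszConst d δ N :=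
          mul_le_mul_of_nonneg_left hsum (by positivity)
      _ = 1 := inv_mul_cancel₀ (ne_of_gt hβpos)
  -- Step C : measurability
  have hcont : ∀ N, Continuous (g N) := by
    intro N
    rw [hg]
    apply continuous_const.mul
    apply continuous_finset_sum
    intro j _
    exact (continuous_const.mul (continuous_charTd _)).mul continuous_const
  -- Step D : pointwise convergence to the indicator
  have hpt : ∀ t, Tendsto (fun N => g N t) atTop
      (𝓝 (Set.indicator {x} (fun _ => (1:ℂ)) t)) := by
    intro t
    by_cases ht : t = x
    · subst ht
      have hval : ∀ N, g N t = 1 := by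
        intro N
        have hβpos := bochnerRieszConst_pos d N hδ
        rw [hg]
        simp only
        have hone : ∀ j ∈ latticeBall d N,
            (((1 - (∑ i, ((j i : ℝ)) ^ 2) / (N : ℝ) ^ 2) ^ δ : ℝ) : ℂ) *
              charTd (fun l => -(j l)) t * charTd j t
            = (((1 - (∑ i, ((j i : ℝ)) ^ 2) / (N : ℝ) ^ 2) ^ δ : ℝ) : ℂ) := by
          intro j _
          rw [mul_assoc, charTd_mul_conj]
          have : charTd j (fun l => t l - t l) = 1 := by
            unfold charTd
            apply Finset.prod_eq_one
            intro l _
            show (fourier (j l) ((t l - t l : UnitAddCircle)) : ℂ) = 1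
            rw [sub_self, fourier_apply, smul_zero]
            exact fourier_zero' (T := 1)
          rw [this, mul_one]
        rw [Finset.sum_congr rfl hone]
        rw [← Complex.ofReal_sum, ← bochnerRieszConst]
        rw [← Complex.ofReal_inv, ← Complex.ofReal_mul, inv_mul_cancel₀ (ne_of_gt hβpos)]
        norm_num
      have hind : Set.indicator {t} (fun _ => (1:ℂ)) t = 1 := by
        rw [Set.indicator_of_mem (Set.mem_singleton t)]
      rw [hind]
      simp only [hval]
      exact tendsto_const_nhds
    · have hind : Set.indicator {x} (fun _ => (1:ℂ)) t = 0 := by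
        rw [Set.indicator_of_notMem (by simpa using ht)]
      rw [hind]
      obtain ⟨i, hi⟩ : ∃ i, t i ≠ x i := by
        by_contra hcon
        push_neg at hcon
        exact ht (funext hcon)
      exact kernel_decay hδ x t i hi
  -- Step E : dominated convergence for the four measures
  have hDCT : ∀ (ν : Measure (Fin d → UnitAddCircle)) [IsFiniteMeasure ν],
      Tendsto (fun N => ∫ a, g N a ∂ν) atTop (𝓝 (((ν {x}).toReal : ℝ) • (1:ℂ))) := by
    intro ν hν
    have := MeasureTheory.tendsto_integral_of_dominated_convergence
      (F := g) (f := Set.indicator {x} (fun _ => (1:ℂ))) (μ := ν) (bound := fun _ => 1)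
      (fun N => (hcont N).aestronglyMeasurable)
      (integrable_const 1)
      (fun N => Filter.Eventually.of_forall (fun a => hbound N a))
      (Filter.Eventually.of_forall hpt)
    rw [integral_indicator_const (1:ℂ) (measurableSet_singleton x)] at this
    exact this
  -- Step F : conclusion
  have hfinal : Tendsto (fun N => cInt μ (g N)) atTop (𝓝 (μ {x})) := by
    unfold cInt
    have h1 := hDCT μ.re.toJordanDecomposition.posPart
    have h2 := hDCT μ.re.toJordanDecomposition.negPart
    have h3 := hDCT μ.im.toJordanDecomposition.posPart
    have h4 := hDCT μ.im.toJordanDecomposition.negPart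
    have hlim := ((h1.sub h2).add (((h3.sub h4)).const_mul Complex.I))
    have hx_eq : ((μ.re.toJordanDecomposition.posPart {x}).toReal • (1:ℂ)
          - (μ.re.toJordanDecomposition.negPart {x}).toReal • (1:ℂ))
        + Complex.I * ((μ.im.toJordanDecomposition.posPart {x}).toReal • (1:ℂ)
          - (μ.im.toJordanDecomposition.negPart {x}).toReal • (1:ℂ)) = μ {x} := by
      have hre : (μ {x}).re = (μ.re.toJordanDecomposition.posPart {x}).toReal
          - (μ.re.toJordanDecomposition.negPart {x}).toReal := by
        have h5 : μ.re {x} = (μ {x}).re := by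
          rw [MeasureTheory.ComplexMeasure.re_apply]
          rfl
        rw [← h5]
        conv_lhs => rw [← MeasureTheory.SignedMeasure.toSignedMeasure_toJordanDecomposition μ.re]
        rw [MeasureTheory.JordanDecomposition.toSignedMeasure, VectorMeasure.sub_apply,
          Measure.toSignedMeasure_apply_measurable (measurableSet_singleton x),
          Measure.toSignedMeasure_apply_measurable (measurableSet_singleton x)]
        rfl
      have him : (μ {x}).im = (μ.im.toJordanDecomposition.posPart {x}).toReal
          - (μ.im.toJordanDecomposition.negPart {x}).toReal := by
        have h5 : μ.im {x} = (μ {x}).im := by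
          rw [MeasureTheory.ComplexMeasure.im_apply]
          rfl
        rw [← h5]
        conv_lhs => rw [← MeasureTheory.SignedMeasure.toSignedMeasure_toJordanDecomposition μ.im]
        rw [MeasureTheory.JordanDecomposition.toSignedMeasure, VectorMeasure.sub_apply,
          Measure.toSignedMeasure_apply_measurable (measurableSet_singleton x),
          Measure.toSignedMeasure_apply_measurable (measurableSet_singleton x)]
        rfl
      apply Complex.ext
      · simp [hre]
      · simp [him]
    rw [← hx_eq]
    exact hlim
  have heq : (fun N : ℕ =>
      ((bochnerRieszConst d δ N : ℝ) : ℂ)⁻¹ *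
        ∑ j ∈ latticeBall d N,
          (((1 - (∑ i, ((j i : ℝ)) ^ 2) / (N : ℝ) ^ 2) ^ δ : ℝ) : ℂ) *
            fourierCoeffTd μ j * charTd j x) = fun N => cInt μ (g N) := funext hrepr
  rw [heq]
  exact hfinal
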